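/- Let A, B ∈ ℝ^{n×n} be such that A is diagonalizable over ℂ, say A = V D V^{−1} with D ∈ ℂ^{n×n} diagonal and V ∈ ℂ^{n×n} invertible, and suppose ker(A) ⊆ ker(B). Then for every nonzero eigenvalue μ ∈ ℂ of A + B we have min over nonzero eigenvalues λ of A of |μ − λ| ≤ cond(V) · ‖B‖, where cond(V) = ‖V‖·‖V^{−1}‖ and ‖·‖ denotes the spectral (operator 2-) norm. -/

import Mathlib

open Matrix Polynomial

/-- The characteristic polynomial of a real matrix, viewed over `ℂ`. Its roots are the
(complex) eigenvalues of the matrix. -/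
noncomputable def charpolyC {ι : Type*} [Fintype ι] [DecidableEq ι]
    (A : Matrix ι ι ℝ) : Polynomial ℂ :=
  (A.charpoly).map (algebraMap ℝ ℂ)

/-- The Euclidean (ℓ²) norm of a finitely supported vector. -/
noncomputable def euclNorm {ι : Type*} [Fintype ι] {𝕜 : Type*} [RCLike 𝕜]
    (v : ι → 𝕜) : ℝ :=
  Real.sqrt (∑ i, ‖v i‖ ^ 2)

/-- The spectral norm (operator 2-norm) of a matrix: the least constant `c ≥ 0` such that
`‖M v‖₂ ≤ c ‖v‖₂` for all vectors `v`. -/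
noncomputable def specNorm {ι κ : Type*} [Fintype ι] [Fintype κ] {𝕜 : Type*} [RCLike 𝕜]
    (M : Matrix ι κ 𝕜) : ℝ :=
  sInf {c : ℝ | 0 ≤ c ∧ ∀ v : κ → 𝕜, euclNorm (M.mulVec v) ≤ c * euclNorm v}

section auxBF
set_option linter.unusedSectionVars false

variable {ι κ : Type*} [Fintype ι] [Fintype κ] {𝕜 : Type*} [RCLike 𝕜]

lemma BF.euclNorm_nonneg (v : ι → 𝕜) : 0 ≤ euclNorm v := Real.sqrt_nonneg _

lemma BF.sq_euclNorm (v : ι → 𝕜) : euclNorm v ^ 2 = ∑ i, ‖v i‖ ^ 2 :=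
  Real.sq_sqrt (by positivity)

lemma BF.euclNorm_eq_norm (v : ι → 𝕜) : euclNorm v = ‖(WithLp.equiv 2 (ι → 𝕜)).symm v‖ := by
  rw [EuclideanSpace.norm_eq, euclNorm]; rfl

noncomputable def BF.clm [DecidableEq κ] (M : Matrix ι κ 𝕜) :
    EuclideanSpace 𝕜 κ →L[𝕜] EuclideanSpace 𝕜 ι :=
  LinearMap.toContinuousLinearMap (Matrix.toEuclideanLin M)

lemma BF.clm_apply [DecidableEq κ] (M : Matrix ι κ 𝕜) (v : κ → 𝕜) :
    BF.clm M ((WithLp.equiv 2 (κ → 𝕜)).symm v) = (WithLp.equiv 2 (ι → 𝕜)).symm (M.mulVec v) := by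
  simp [BF.clm, Matrix.toEuclideanLin_apply]

lemma BF.specNorm_eq [DecidableEq κ] (M : Matrix ι κ 𝕜) : specNorm M = ‖BF.clm M‖ := by
  rw [specNorm, ContinuousLinearMap.norm_def]
  congr 1
  ext c
  refine and_congr_right fun _ => ?_
  constructor
  · intro h x
    have := h ((WithLp.equiv 2 (κ → 𝕜)) x)
    rw [BF.euclNorm_eq_norm, BF.euclNorm_eq_norm] at this
    rw [← BF.clm_apply M] at this; simpa using this
  · intro h v
    have := h ((WithLp.equiv 2 (κ → 𝕜)).symm v)
    rw [BF.clm_apply] at this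
    rw [BF.euclNorm_eq_norm, BF.euclNorm_eq_norm]
    simpa using this

lemma BF.specNorm_nonneg [DecidableEq κ] (M : Matrix ι κ 𝕜) : 0 ≤ specNorm M := by
  rw [BF.specNorm_eq]; exact norm_nonneg _

lemma BF.euclNorm_mulVec_le [DecidableEq κ] (M : Matrix ι κ 𝕜) (v : κ → 𝕜) :
    euclNorm (M.mulVec v) ≤ specNorm M * euclNorm v := by
  rw [BF.specNorm_eq, BF.euclNorm_eq_norm, BF.euclNorm_eq_norm, ← BF.clm_apply]
  exact (BF.clm M).le_opNorm _

lemma BF.mulVec_map_re (M : Matrix ι κ ℝ) (v : κ → ℂ) (i : ι) :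
    ((M.map (algebraMap ℝ ℂ)).mulVec v i).re = M.mulVec (fun j => (v j).re) i := by
  simp [Matrix.mulVec, dotProduct, Complex.re_sum, Complex.mul_re]

lemma BF.mulVec_map_im (M : Matrix ι κ ℝ) (v : κ → ℂ) (i : ι) :
    ((M.map (algebraMap ℝ ℂ)).mulVec v i).im = M.mulVec (fun j => (v j).im) i := by
  simp [Matrix.mulVec, dotProduct, Complex.im_sum, Complex.mul_im]

lemma BF.eval_charpoly [DecidableEq ι] (M : Matrix ι ι ℂ) (μ : ℂ) :
    M.charpoly.eval μ = (μ • (1 : Matrix ι ι ℂ) - M).det := by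
  rw [Matrix.charpoly, ← Polynomial.coe_evalRingHom, RingHom.map_det]
  congr 1
  ext i j
  by_cases h : i = j <;>
    simp [h, charmatrix_apply, Matrix.diagonal_apply, Matrix.one_apply, Matrix.smul_apply,
      Matrix.sub_apply]

lemma BF.mulVec_map_eq_zero (M P : Matrix ι κ ℝ)
    (h : ∀ u : κ → ℝ, M.mulVec u = 0 → P.mulVec u = 0)
    (v : κ → ℂ) (hv : (M.map (algebraMap ℝ ℂ)).mulVec v = 0) :
    (P.map (algebraMap ℝ ℂ)).mulVec v = 0 := by
  have hre : M.mulVec (fun j => (v j).re) = 0 := by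
    funext i
    have h1 := congrArg Complex.re (congrFun hv i)
    rw [BF.mulVec_map_re] at h1
    simpa using h1
  have him : M.mulVec (fun j => (v j).im) = 0 := by
    funext i
    have h1 := congrArg Complex.im (congrFun hv i)
    rw [BF.mulVec_map_im] at h1
    simpa using h1
  funext i
  apply Complex.ext
  · rw [BF.mulVec_map_re]
    simpa using congrFun (h _ hre) i
  · rw [BF.mulVec_map_im]
    simpa using congrFun (h _ him) i

lemma BF.euclNorm_mulVec_map_le [DecidableEq κ] (M : Matrix ι κ ℝ) (v : κ → ℂ) :
    euclNorm ((M.map (algebraMap ℝ ℂ)).mulVec v) ≤ specNorm M * euclNorm v := by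
  set r : κ → ℝ := fun j => (v j).re with hr
  set s : κ → ℝ := fun j => (v j).im with hs
  have key : euclNorm ((M.map (algebraMap ℝ ℂ)).mulVec v) ^ 2
      ≤ (specNorm M * euclNorm v) ^ 2 := by
    rw [BF.sq_euclNorm]
    have h1 : ∀ i, ‖(M.map (algebraMap ℝ ℂ)).mulVec v i‖ ^ 2
        = M.mulVec r i ^ 2 + M.mulVec s i ^ 2 := by
      intro i
      rw [Complex.sq_norm, Complex.normSq_apply, BF.mulVec_map_re,
        BF.mulVec_map_im]
      ring
    calc ∑ i, ‖(M.map (algebraMap ℝ ℂ)).mulVec v i‖ ^ 2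
        = (∑ i, ‖M.mulVec r i‖ ^ 2) + ∑ i, ‖M.mulVec s i‖ ^ 2 := by
          simp only [h1, Real.norm_eq_abs, sq_abs, Finset.sum_add_distrib]
      _ = euclNorm (M.mulVec r) ^ 2 + euclNorm (M.mulVec s) ^ 2 := by
          rw [BF.sq_euclNorm, BF.sq_euclNorm]
      _ ≤ (specNorm M * euclNorm r) ^ 2 + (specNorm M * euclNorm s) ^ 2 := by
          apply add_le_add <;> refine pow_le_pow_left₀ (BF.euclNorm_nonneg _) ?_ 2 <;>
            exact BF.euclNorm_mulVec_le M _
      _ = specNorm M ^ 2 * (euclNorm r ^ 2 + euclNorm s ^ 2) := by ring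
      _ = specNorm M ^ 2 * euclNorm v ^ 2 := by
          congr 1
          rw [BF.sq_euclNorm, BF.sq_euclNorm, BF.sq_euclNorm, ← Finset.sum_add_distrib]
          congr 1; funext i
          rw [Complex.sq_norm, Complex.normSq_apply]
          simp only [hr, hs, Real.norm_eq_abs, sq_abs]
          ring
      _ = (specNorm M * euclNorm v) ^ 2 := by ring
  have h0 : 0 ≤ specNorm M * euclNorm v :=
    mul_nonneg (BF.specNorm_nonneg M) (BF.euclNorm_nonneg v)
  nlinarith [BF.euclNorm_nonneg ((M.map (algebraMap ℝ ℂ)).mulVec v)]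

end auxBF

/-- Bauer–Fike-like bound for kernel-preserving perturbations: if `A` is diagonalizable over
`ℂ` as `A = V D V⁻¹` and `ker A ⊆ ker B`, then every nonzero eigenvalue `μ` of `A + B` is
within `cond(V)‖B‖` of some nonzero eigenvalue `λ` of `A`. -/
theorem bauerFike_kernel_preserving {n : ℕ} (A B : Matrix (Fin n) (Fin n) ℝ)
    (V D : Matrix (Fin n) (Fin n) ℂ) (hD : D.IsDiag) (hV : IsUnit V.det)
    (hdiag : A.map (algebraMap ℝ ℂ) = V * D * V⁻¹)
    (hker : LinearMap.ker A.mulVecLin ≤ LinearMap.ker B.mulVecLin) :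
    ∀ μ : ℂ, μ ≠ 0 → (charpolyC (A + B)).IsRoot μ →
      ∃ lam : ℂ, lam ≠ 0 ∧ (charpolyC A).IsRoot lam ∧
        ‖μ - lam‖ ≤ (specNorm V * specNorm V⁻¹) * specNorm B := by
  intro μ hμ hroot
  classical
  set Aℂ := A.map (algebraMap ℝ ℂ) with hAc
  set Bℂ := B.map (algebraMap ℝ ℂ) with hBc
  have hmapadd : (A + B).map (algebraMap ℝ ℂ) = Aℂ + Bℂ :=
    Matrix.map_add _ (fun a b => map_add _ a b) A B
  -- extract an eigenvector of A + B
  have hdet : (μ • (1 : Matrix (Fin n) (Fin n) ℂ) - (Aℂ + Bℂ)).det = 0 := by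
    have h1 : ((A + B).map (algebraMap ℝ ℂ)).charpoly.eval μ = 0 := by
      rw [Matrix.charpoly_map]; exact hroot
    rw [BF.eval_charpoly, hmapadd] at h1
    exact h1
  obtain ⟨x, hx0, hx⟩ := (Matrix.exists_mulVec_eq_zero_iff).2 hdet
  have heig : Aℂ.mulVec x + Bℂ.mulVec x = μ • x := by
    rw [Matrix.sub_mulVec, Matrix.add_mulVec, Matrix.smul_mulVec,
      Matrix.one_mulVec] at hx
    exact (sub_eq_zero.mp hx).symm
  -- diagonal structure
  set d : Fin n → ℂ := D.diag with hd
  have hDdiag : D = Matrix.diagonal d := hD.diagonal_diag.symm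
  have hVV : V * V⁻¹ = 1 := Matrix.mul_nonsing_inv V hV
  have hVV' : V⁻¹ * V = 1 := Matrix.nonsing_inv_mul V hV
  have hVVinv : ∀ u : Fin n → ℂ, V.mulVec (V⁻¹.mulVec u) = u := fun u => by
    rw [Matrix.mulVec_mulVec, hVV, Matrix.one_mulVec]
  have hVinvV : ∀ u : Fin n → ℂ, V⁻¹.mulVec (V.mulVec u) = u := fun u => by
    rw [Matrix.mulVec_mulVec, hVV', Matrix.one_mulVec]
  set y := V⁻¹.mulVec x with hy
  have hxy : V.mulVec y = x := hVVinv x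
  set z : Fin n → ℂ := fun i => if d i = 0 then 0 else y i with hz
  have hdz : ∀ i, d i * z i = d i * y i := by
    intro i; by_cases h : d i = 0 <;> simp [hz, h]
  have hDu : ∀ u : Fin n → ℂ, D.mulVec u = fun i => d i * u i := by
    intro u; funext i; rw [hDdiag]; exact Matrix.mulVec_diagonal d u i
  have hAx : Aℂ.mulVec x = V.mulVec (fun i => d i * z i) := by
    rw [hdiag, ← Matrix.mulVec_mulVec, ← Matrix.mulVec_mulVec, ← hy, hDu]
    exact congrArg _ (funext fun i => (hdz i).symm)
  have hAVz : Aℂ.mulVec (V.mulVec z) = V.mulVec (fun i => d i * z i) := by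
    rw [hdiag, ← Matrix.mulVec_mulVec, ← Matrix.mulVec_mulVec, hVinvV, hDu]
  -- kernel condition
  have hkerR : ∀ u : Fin n → ℝ, A.mulVec u = 0 → B.mulVec u = 0 := by
    intro u hu
    have hm : u ∈ LinearMap.ker A.mulVecLin := by
      simpa [LinearMap.mem_ker, Matrix.mulVecLin_apply] using hu
    simpa [LinearMap.mem_ker, Matrix.mulVecLin_apply] using hker hm
  have hBsub : Bℂ.mulVec x = Bℂ.mulVec (V.mulVec z) := by
    have h0 : Aℂ.mulVec (x - V.mulVec z) = 0 := by
      rw [Matrix.mulVec_sub, hAx, hAVz, sub_self]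
    have h1 := BF.mulVec_map_eq_zero A B hkerR _ h0
    rw [← hBc] at h1
    rw [Matrix.mulVec_sub] at h1
    exact sub_eq_zero.mp h1
  set w := V⁻¹.mulVec (Bℂ.mulVec (V.mulVec z)) with hw
  have hmain : ∀ i, d i * z i + w i = μ * y i := by
    have h1 : V.mulVec (fun i => d i * z i) + Bℂ.mulVec (V.mulVec z) = μ • x := by
      rw [← hAx, ← hBsub]; exact heig
    have h3 : V⁻¹.mulVec (V.mulVec (fun i => d i * z i) + Bℂ.mulVec (V.mulVec z))
        = V⁻¹.mulVec (μ • x) := by rw [h1]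
    rw [Matrix.mulVec_add, hVinvV, Matrix.mulVec_smul] at h3
    intro i
    have h4 := congrFun h3 i
    simpa [hw, hy] using h4
  -- z is nonzero
  have hzne : z ≠ 0 := by
    intro h0
    have hwz : w = 0 := by rw [hw, h0]; simp
    have hy0 : y = 0 := by
      funext i
      have h5 := hmain i
      rw [h0, hwz] at h5
      simp only [Pi.zero_apply, mul_zero, add_zero, zero_add] at h5
      rcases mul_eq_zero.mp h5.symm with h | h
      · exact absurd h hμ
      · simpa using h
    exact hx0 (by rw [← hxy, hy0, Matrix.mulVec_zero])
  -- all diagonal entries are eigenvalues of A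
  have hrootsA : ∀ i, (charpolyC A).IsRoot (d i) := by
    intro i
    have hconj : d i • (1 : Matrix (Fin n) (Fin n) ℂ) - Aℂ = V * (d i • 1 - D) * V⁻¹ := by
      rw [hdiag, Matrix.mul_sub, Matrix.sub_mul]
      congr 1
      rw [Matrix.mul_smul, mul_one, Matrix.smul_mul, hVV]
    have hmid : (d i • (1 : Matrix (Fin n) (Fin n) ℂ) - D).det = 0 := by
      have hdd : d i • (1 : Matrix (Fin n) (Fin n) ℂ) - D
          = Matrix.diagonal (fun j => d i - d j) := by
        ext a b
        by_cases h : a = b <;>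
          simp [hDdiag, Matrix.diagonal_apply, h, Matrix.one_apply, Matrix.smul_apply,
            Matrix.sub_apply]
      rw [hdd, Matrix.det_diagonal]
      exact Finset.prod_eq_zero (Finset.mem_univ i) (by simp)
    show ((A.charpoly).map (algebraMap ℝ ℂ)).eval (d i) = 0
    rw [← Matrix.charpoly_map, BF.eval_charpoly, ← hAc, hconj, Matrix.det_mul,
      Matrix.det_mul, hmid]
    ring
  -- the contradiction argument
  by_contra hcon
  push_neg at hcon
  set c := specNorm V * specNorm V⁻¹ * specNorm B with hc
  have hcon' : ∀ i, d i ≠ 0 → c < ‖μ - d i‖ := by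
    intro i hi
    have := hcon (d i) hi (hrootsA i)
    rw [hc]
    exact this
  obtain ⟨i₀, hzi₀⟩ := Function.ne_iff.mp hzne
  have hdi₀ : d i₀ ≠ 0 := by
    intro h; apply hzi₀; simp [hz, h]
  have hwi : ∀ i, d i ≠ 0 → w i = (μ - d i) * z i := by
    intro i hi
    have h1 := hmain i
    have hzi : z i = y i := by simp [hz, hi]
    rw [hzi] at h1 ⊢
    linear_combination h1
  have hcnonneg : 0 ≤ c :=
    mul_nonneg (mul_nonneg (BF.specNorm_nonneg _) (BF.specNorm_nonneg _))
      (BF.specNorm_nonneg _)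
  have hle : ∀ i, (c * ‖z i‖) ^ 2 ≤ ‖w i‖ ^ 2 := by
    intro i
    by_cases hi : d i = 0
    · have : z i = 0 := by simp [hz, hi]
      rw [this]
      simp only [norm_zero, mul_zero]
      simpa using sq_nonneg ‖w i‖
    · rw [hwi i hi, norm_mul]
      refine pow_le_pow_left₀ (by positivity) ?_ 2
      exact mul_le_mul_of_nonneg_right (hcon' i hi).le (norm_nonneg _)
  have hlt : (c * ‖z i₀‖) ^ 2 < ‖w i₀‖ ^ 2 := by
    have hz0 : (0 : ℝ) < ‖z i₀‖ := by
      simpa [norm_pos_iff] using hzi₀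
    rw [hwi i₀ hdi₀, norm_mul]
    refine pow_lt_pow_left₀ ?_ (by positivity) (by norm_num)
    exact mul_lt_mul_of_pos_right (hcon' i₀ hdi₀) hz0
  have hsum : (c * euclNorm z) ^ 2 < euclNorm w ^ 2 := by
    rw [mul_pow, BF.sq_euclNorm, BF.sq_euclNorm, Finset.mul_sum]
    have hrw : ∀ i : Fin n, c ^ 2 * ‖z i‖ ^ 2 = (c * ‖z i‖) ^ 2 := fun i => by ring
    simp_rw [hrw]
    exact Finset.sum_lt_sum (fun i _ => hle i) ⟨i₀, Finset.mem_univ _, hlt⟩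
  have hwle : euclNorm w ≤ c * euclNorm z := by
    rw [hw, hc]
    calc euclNorm (V⁻¹.mulVec (Bℂ.mulVec (V.mulVec z)))
        ≤ specNorm V⁻¹ * euclNorm (Bℂ.mulVec (V.mulVec z)) := BF.euclNorm_mulVec_le _ _
      _ ≤ specNorm V⁻¹ * (specNorm B * euclNorm (V.mulVec z)) := by
          refine mul_le_mul_of_nonneg_left ?_ (BF.specNorm_nonneg _)
          rw [hBc]
          exact BF.euclNorm_mulVec_map_le B (V.mulVec z)
      _ ≤ specNorm V⁻¹ * (specNorm B * (specNorm V * euclNorm z)) := by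
          refine mul_le_mul_of_nonneg_left
            (mul_le_mul_of_nonneg_left ?_ (BF.specNorm_nonneg _)) (BF.specNorm_nonneg _)
          exact BF.euclNorm_mulVec_le _ _
      _ = specNorm V * specNorm V⁻¹ * specNorm B * euclNorm z := by ring
  have hfinal : euclNorm w ^ 2 ≤ (c * euclNorm z) ^ 2 :=
    pow_le_pow_left₀ (BF.euclNorm_nonneg _) hwle 2
  linarith
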